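/- Under the cotangent-lifted stereographic projection S_ρ with the formulas p = ρ μ/(ρ−h), r = ((ρ−h)/ρ)W₃ + (W_h/ρ)μ, the pullback identity r·dp = W·d(OM) holds, i.e. r·dp = W₃·dμ + ζ W_h dh as 1-forms on T*(Q_ρ∖{N}). -/

import Mathlib

/-- Under the cotangent-lifted stereographic projection
`p = ρμ/(ρ-h)`, `r = ((ρ-h)/ρ)W₃ + (W_h/ρ)μ`, the pullback identity
`r·dp = W₃·dμ + ζ W_h dh` holds as 1-forms on `T*(Q_ρ∖{N})`: along every
differentiable curve `t ↦ (μ(t), h(t), W₃(t), W_h(t))` in the constraint set,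
the pairing of `r` with the derivative of `p` equals `W₃·μ' + ζ W_h h'`. -/
theorem stereographic_lift_pullback_one_form
    (ζ ρ : ℝ) (hζ : ζ = 1 ∨ ζ = -1) (hρ : 0 < ρ)
    (μ W₃ : ℝ → EuclideanSpace ℝ (Fin 3)) (h Wh : ℝ → ℝ)
    (hQ : ∀ t, (h t) ^ 2 + ζ * ‖μ t‖ ^ 2 = ρ ^ 2)
    (htan : ∀ t, (inner ℝ (W₃ t) (μ t) : ℝ) + ζ * Wh t * h t = 0)
    (hN : ∀ t, h t ≠ ρ)
    (t : ℝ)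
    (μ' : EuclideanSpace ℝ (Fin 3)) (h' : ℝ)
    (hμ : HasDerivAt μ μ' t) (hh : HasDerivAt h h' t)
    (p' : EuclideanSpace ℝ (Fin 3))
    (hp : HasDerivAt (fun t => (ρ / (ρ - h t)) • μ t) p' t) :
    (inner ℝ (((ρ - h t) / ρ) • W₃ t + (Wh t / ρ) • μ t) p' : ℝ) =
      (inner ℝ (W₃ t) μ' : ℝ) + ζ * Wh t * h' := by
  have hρ0 : ρ ≠ 0 := hρ.ne'
  have hne : ρ - h t ≠ 0 := sub_ne_zero.mpr (hN t).symm
  have hζ2 : ζ ^ 2 = 1 := by rcases hζ with rfl | rfl <;> norm_num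
  -- derivative of the scalar factor
  have hs : HasDerivAt (fun s => ρ / (ρ - h s)) (ρ * h' / (ρ - h t) ^ 2) t := by
    have := (hasDerivAt_const t ρ).div ((hasDerivAt_const t ρ).sub hh) hne
    refine this.congr_deriv ?_
    simp only [Pi.sub_apply]; ring
  have hp2 := hs.smul hμ
  have hp' : p' = (ρ / (ρ - h t)) • μ' + (ρ * h' / (ρ - h t) ^ 2) • μ t :=
    hp.unique hp2
  -- derivative of the constraint
  have hQ' : (fun s => h s ^ 2 + ζ * (inner ℝ (μ s) (μ s) : ℝ)) = fun _ => ρ ^ 2 := by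
    funext s
    rw [real_inner_self_eq_norm_sq]
    exact hQ s
  have hzero : 2 * h t ^ 1 * h' + ζ * ((inner ℝ (μ t) μ' : ℝ) + (inner ℝ μ' (μ t) : ℝ)) = 0 :=
    ((hh.pow 2).add ((hμ.inner ℝ hμ).const_mul ζ)).unique
      (by convert hasDerivAt_const t (ρ ^ 2) using 1; exact hQ')
  have hcomm : (inner ℝ μ' (μ t) : ℝ) = inner ℝ (μ t) μ' := real_inner_comm _ _
  rw [hcomm] at hzero
  have hd : (inner ℝ (μ t) μ' : ℝ) = -(ζ * h t * h') := by
    linear_combination (ζ / 2) * hzero - (inner ℝ (μ t) μ' : ℝ) * hζ2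
  have ha : (inner ℝ (W₃ t) (μ t) : ℝ) = -(ζ * Wh t * h t) := by linarith [htan t]
  have hc : (inner ℝ (μ t) (μ t) : ℝ) = ζ * (ρ ^ 2 - h t ^ 2) := by
    have hq := hQ t
    rw [← real_inner_self_eq_norm_sq] at hq
    linear_combination ζ * hq - (inner ℝ (μ t) (μ t) : ℝ) * hζ2
  rw [hp']
  simp only [inner_add_left, inner_add_right, real_inner_smul_left, real_inner_smul_right]
  rw [ha, hd, hc]
  field_simp
  ring
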